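/- For a two-qubit density matrix ρ_AB with ordered eigenvalues λ₁ ≥ λ₂ ≥ λ₃ ≥ λ₄ and reduced states with minimal eigenvalues λ_A, λ_B, one has λ_A + λ_B ≥ λ₂ + λ₃ + 2λ₄. -/

import Mathlib

open Matrix ComplexOrder

/-- Classical relative entropy with convention `0 * log 0 = 0` (automatic since
`Real.log 0 = 0`). -/
noncomputable def relEnt {d : ℕ} (p q : Fin d → ℝ) : ℝ :=
  ∑ i, p i * (Real.log (p i) - Real.log (q i))

/-- Non-decreasing rearrangement `p↑`. -/
noncomputable def sortAsc {d : ℕ} (p : Fin d → ℝ) : Fin d → ℝ :=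
  p ∘ Tuple.sort p

/-- Non-increasing rearrangement `p↓`. -/
noncomputable def sortDesc {d : ℕ} (p : Fin d → ℝ) : Fin d → ℝ :=
  (p ∘ Tuple.sort p) ∘ Fin.rev
/-- Matrix logarithm of a Hermitian matrix via its spectral decomposition
(junk value `0` on non-Hermitian matrices). -/
noncomputable def matLog {n : Type*} [Fintype n] [DecidableEq n]
    (A : Matrix n n ℂ) : Matrix n n ℂ :=
  if h : A.IsHermitian then
    (h.eigenvectorUnitary : Matrix n n ℂ) *
      Matrix.diagonal (fun i => (Real.log (h.eigenvalues i) : ℂ)) *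
      (star h.eigenvectorUnitary : Matrix n n ℂ)
  else 0

/-- Eigenvalue vector of a Hermitian matrix (junk value `0` otherwise). -/
noncomputable def evals {n : Type*} [Fintype n] [DecidableEq n]
    (A : Matrix n n ℂ) : n → ℝ :=
  if h : A.IsHermitian then h.eigenvalues else 0

/-- Quantum relative entropy `S(ρ‖σ) = Tr (ρ (log ρ − log σ))`. -/
noncomputable def qRelEnt {n : Type*} [Fintype n] [DecidableEq n]
    (ρ σ : Matrix n n ℂ) : ℝ :=
  ((ρ * (matLog ρ - matLog σ)).trace).re

/-- von Neumann entropy `S(ρ) = −Tr (ρ log ρ)`. -/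
noncomputable def vnEnt {n : Type*} [Fintype n] [DecidableEq n]
    (ρ : Matrix n n ℂ) : ℝ :=
  -((ρ * matLog ρ).trace).re

/-- Partial trace over the second (B) factor. -/
noncomputable def ptraceB {a b : ℕ}
    (ρ : Matrix (Fin a × Fin b) (Fin a × Fin b) ℂ) : Matrix (Fin a) (Fin a) ℂ :=
  fun i j => ∑ k, ρ (i, k) (j, k)

/-- Partial trace over the first (A) factor. -/
noncomputable def ptraceA {a b : ℕ}
    (ρ : Matrix (Fin a × Fin b) (Fin a × Fin b) ℂ) : Matrix (Fin b) (Fin b) ℂ :=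
  fun i j => ∑ k, ρ (k, i) (k, j)

/-- Eigenvalues of a matrix on a bipartite space, reindexed by `Fin (a*b)`. -/
noncomputable def evalsP {a b : ℕ}
    (ρ : Matrix (Fin a × Fin b) (Fin a × Fin b) ℂ) : Fin (a * b) → ℝ :=
  evals ρ ∘ finProdFinEquiv.symm


private lemma herm_ptraceB {a b : ℕ} {ρ : Matrix (Fin a × Fin b) (Fin a × Fin b) ℂ}
    (h : ρ.IsHermitian) : (ptraceB ρ).IsHermitian := by
  ext i j
  simp only [Matrix.conjTranspose_apply, ptraceB, star_sum]
  exact Finset.sum_congr rfl fun k _ => h.apply (i,k) (j,k)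

private lemma herm_ptraceA {a b : ℕ} {ρ : Matrix (Fin a × Fin b) (Fin a × Fin b) ℂ}
    (h : ρ.IsHermitian) : (ptraceA ρ).IsHermitian := by
  ext i j
  simp only [Matrix.conjTranspose_apply, ptraceA, star_sum]
  exact Finset.sum_congr rfl fun k _ => h.apply (k,i) (k,j)

private lemma quadForm_bounds {n : Type*} [Fintype n] [DecidableEq n] {A : Matrix n n ℂ}
    (hA : A.IsHermitian) (v : n → ℂ) (hv : star v ⬝ᵥ v = 1) {lo hi : ℝ}
    (hlo : ∀ i, lo ≤ hA.eigenvalues i) (hhi : ∀ i, hA.eigenvalues i ≤ hi) :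
    lo ≤ (star v ⬝ᵥ A *ᵥ v).re ∧ (star v ⬝ᵥ A *ᵥ v).re ≤ hi := by
  obtain ⟨hU1, hU2⟩ := Unitary.mem_iff.mp hA.eigenvectorUnitary.2
  have hsc : star v ᵥ* (hA.eigenvectorUnitary : Matrix n n ℂ)
      = star (star (hA.eigenvectorUnitary : Matrix n n ℂ) *ᵥ v) := by
    rw [star_mulVec, star_eq_conjTranspose, conjTranspose_conjTranspose]
  have key : star v ⬝ᵥ A *ᵥ v
      = ∑ i, (hA.eigenvalues i : ℂ) *
          (star ((star (hA.eigenvectorUnitary : Matrix n n ℂ) *ᵥ v) i) *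
           ((star (hA.eigenvectorUnitary : Matrix n n ℂ) *ᵥ v) i)) := by
    conv_lhs => rw [hA.spectral_theorem, Unitary.conjStarAlgAut_apply]
    rw [← mulVec_mulVec, ← mulVec_mulVec, dotProduct_mulVec, hsc]
    simp only [mulVec_diagonal, dotProduct, Pi.star_apply, Function.comp_apply]
    exact Finset.sum_congr rfl fun i _ => mul_left_comm _ _ _
  have hcnorm : ∑ i, Complex.normSq ((star (hA.eigenvectorUnitary : Matrix n n ℂ) *ᵥ v) i) = 1 := by
    have h1 : star (star (hA.eigenvectorUnitary : Matrix n n ℂ) *ᵥ v)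
        ⬝ᵥ (star (hA.eigenvectorUnitary : Matrix n n ℂ) *ᵥ v) = 1 := by
      rw [← hsc, ← dotProduct_mulVec, mulVec_mulVec, hU2, one_mulVec, hv]
    have h2 := congrArg Complex.re h1
    simpa [dotProduct, Complex.normSq, Complex.mul_re, Complex.re_sum] using h2
  have key2 : (star v ⬝ᵥ A *ᵥ v).re
      = ∑ i, hA.eigenvalues i *
          Complex.normSq ((star (hA.eigenvectorUnitary : Matrix n n ℂ) *ᵥ v) i) := by
    rw [key, Complex.re_sum]
    refine Finset.sum_congr rfl fun i _ => ?_
    rw [show star ((star (hA.eigenvectorUnitary : Matrix n n ℂ) *ᵥ v) i) *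
          ((star (hA.eigenvectorUnitary : Matrix n n ℂ) *ᵥ v) i)
        = (Complex.normSq ((star (hA.eigenvectorUnitary : Matrix n n ℂ) *ᵥ v) i) : ℂ) from by
      rw [Complex.star_def, mul_comm, Complex.mul_conj], ← Complex.ofReal_mul,
      Complex.ofReal_re]
  constructor
  · rw [key2, show lo = ∑ i, lo *
        Complex.normSq ((star (hA.eigenvectorUnitary : Matrix n n ℂ) *ᵥ v) i) from by
      rw [← Finset.mul_sum, hcnorm, mul_one]]
    exact Finset.sum_le_sum fun i _ =>
      mul_le_mul_of_nonneg_right (hlo i) (Complex.normSq_nonneg _)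
  · rw [key2, show hi = ∑ i, hi *
        Complex.normSq ((star (hA.eigenvectorUnitary : Matrix n n ℂ) *ᵥ v) i) from by
      rw [← Finset.mul_sum, hcnorm, mul_one]]
    exact Finset.sum_le_sum fun i _ =>
      mul_le_mul_of_nonneg_right (hhi i) (Complex.normSq_nonneg _)

private lemma keyA (ρ : Matrix (Fin 2 × Fin 2) (Fin 2 × Fin 2) ℂ) (u w w' : Fin 2 → ℂ)
    (h00 : w 0 * star (w 0) + w' 0 * star (w' 0) = 1)
    (h01 : w 0 * star (w 1) + w' 0 * star (w' 1) = 0)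
    (h10 : w 1 * star (w 0) + w' 1 * star (w' 0) = 0)
    (h11 : w 1 * star (w 1) + w' 1 * star (w' 1) = 1) :
    (star (fun p : Fin 2 × Fin 2 => u p.1 * w p.2) ⬝ᵥ
        ρ *ᵥ (fun p : Fin 2 × Fin 2 => u p.1 * w p.2)) +
      (star (fun p : Fin 2 × Fin 2 => u p.1 * w' p.2) ⬝ᵥ
        ρ *ᵥ (fun p : Fin 2 × Fin 2 => u p.1 * w' p.2)) =
      star u ⬝ᵥ (ptraceB ρ) *ᵥ u := by
  simp only [dotProduct, mulVec, ptraceB, Fintype.sum_prod_type, Fin.sum_univ_two,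
    Pi.star_apply, star_mul']
  linear_combination
    (star (u 0) * ρ (0,0) (0,0) * u 0 + star (u 0) * ρ (0,0) (1,0) * u 1 +
      star (u 1) * ρ (1,0) (0,0) * u 0 + star (u 1) * ρ (1,0) (1,0) * u 1) * h00 +
    (star (u 0) * ρ (0,0) (0,1) * u 0 + star (u 0) * ρ (0,0) (1,1) * u 1 +
      star (u 1) * ρ (1,0) (0,1) * u 0 + star (u 1) * ρ (1,0) (1,1) * u 1) * h10 +
    (star (u 0) * ρ (0,1) (0,0) * u 0 + star (u 0) * ρ (0,1) (1,0) * u 1 +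
      star (u 1) * ρ (1,1) (0,0) * u 0 + star (u 1) * ρ (1,1) (1,0) * u 1) * h01 +
    (star (u 0) * ρ (0,1) (0,1) * u 0 + star (u 0) * ρ (0,1) (1,1) * u 1 +
      star (u 1) * ρ (1,1) (0,1) * u 0 + star (u 1) * ρ (1,1) (1,1) * u 1) * h11

private lemma keyB (ρ : Matrix (Fin 2 × Fin 2) (Fin 2 × Fin 2) ℂ) (w u u' : Fin 2 → ℂ)
    (h00 : u 0 * star (u 0) + u' 0 * star (u' 0) = 1)
    (h01 : u 0 * star (u 1) + u' 0 * star (u' 1) = 0)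
    (h10 : u 1 * star (u 0) + u' 1 * star (u' 0) = 0)
    (h11 : u 1 * star (u 1) + u' 1 * star (u' 1) = 1) :
    (star (fun p : Fin 2 × Fin 2 => u p.1 * w p.2) ⬝ᵥ
        ρ *ᵥ (fun p : Fin 2 × Fin 2 => u p.1 * w p.2)) +
      (star (fun p : Fin 2 × Fin 2 => u' p.1 * w p.2) ⬝ᵥ
        ρ *ᵥ (fun p : Fin 2 × Fin 2 => u' p.1 * w p.2)) =
      star w ⬝ᵥ (ptraceA ρ) *ᵥ w := by
  simp only [dotProduct, mulVec, ptraceA, Fintype.sum_prod_type, Fin.sum_univ_two,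
    Pi.star_apply, star_mul']
  linear_combination
    (star (w 0) * ρ (0,0) (0,0) * w 0 + star (w 0) * ρ (0,0) (0,1) * w 1 +
      star (w 1) * ρ (0,1) (0,0) * w 0 + star (w 1) * ρ (0,1) (0,1) * w 1) * h00 +
    (star (w 0) * ρ (1,0) (0,0) * w 0 + star (w 0) * ρ (1,0) (0,1) * w 1 +
      star (w 1) * ρ (1,1) (0,0) * w 0 + star (w 1) * ρ (1,1) (0,1) * w 1) * h01 +
    (star (w 0) * ρ (0,0) (1,0) * w 0 + star (w 0) * ρ (0,0) (1,1) * w 1 +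
      star (w 1) * ρ (0,1) (1,0) * w 0 + star (w 1) * ρ (0,1) (1,1) * w 1) * h10 +
    (star (w 0) * ρ (1,0) (1,0) * w 0 + star (w 0) * ρ (1,0) (1,1) * w 1 +
      star (w 1) * ρ (1,1) (1,0) * w 0 + star (w 1) * ρ (1,1) (1,1) * w 1) * h11

private lemma unit_tensor (u w : Fin 2 → ℂ)
    (hu : star (u 0) * u 0 + star (u 1) * u 1 = 1)
    (hw : star (w 0) * w 0 + star (w 1) * w 1 = 1) :
    star (fun p : Fin 2 × Fin 2 => u p.1 * w p.2) ⬝ᵥ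
      (fun p : Fin 2 × Fin 2 => u p.1 * w p.2) = 1 := by
  simp only [dotProduct, Fintype.sum_prod_type, Fin.sum_univ_two, Pi.star_apply, star_mul']
  linear_combination (star (w 0) * w 0 + star (w 1) * w 1) * hu + hw

private lemma entry_eq (M U : Matrix (Fin 2) (Fin 2) ℂ) (m : Fin 2) :
    star (fun i => U i m) ⬝ᵥ M *ᵥ (fun i => U i m) = (star U * M * U) m m := by
  simp only [dotProduct, mulVec, Matrix.mul_apply, Matrix.star_apply, Pi.star_apply,
    Fin.sum_univ_two]
  ring

private lemma trace_eq_sum_evals {n : Type*} [Fintype n] [DecidableEq n] {A : Matrix n n ℂ}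
    (hA : A.IsHermitian) : A.trace = ∑ i, (hA.eigenvalues i : ℂ) := by
  conv_lhs => rw [hA.spectral_theorem]
  rw [Unitary.conjStarAlgAut_apply, trace_mul_cycle, (Unitary.mem_iff.mp hA.eigenvectorUnitary.2).1, one_mul,
    trace_diagonal]
  rfl

theorem stmt_9 (ρ : Matrix (Fin 2 × Fin 2) (Fin 2 × Fin 2) ℂ)
    (hρ : ρ.PosSemidef) (hρ1 : ρ.trace = 1) :
    min (evals (ptraceB ρ) 0) (evals (ptraceB ρ) 1) +
      min (evals (ptraceA ρ) 0) (evals (ptraceA ρ) 1) ≥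
      sortDesc (evalsP ρ) ⟨1, by norm_num⟩ + sortDesc (evalsP ρ) ⟨2, by norm_num⟩ +
        2 * sortDesc (evalsP ρ) ⟨3, by norm_num⟩ := by
  have hH : ρ.IsHermitian := hρ.1
  have hA : (ptraceB ρ).IsHermitian := herm_ptraceB hH
  have hB : (ptraceA ρ).IsHermitian := herm_ptraceA hH
  -- sortDesc facts
  have hmax : ∀ q : Fin (2*2), evalsP ρ q ≤ sortDesc (evalsP ρ) ⟨0, by norm_num⟩ := by
    intro q
    have h1 : evalsP ρ q
        = (evalsP ρ ∘ Tuple.sort (evalsP ρ)) ((Tuple.sort (evalsP ρ)).symm q) := by simp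
    have h2 : sortDesc (evalsP ρ) ⟨0, by norm_num⟩
        = (evalsP ρ ∘ Tuple.sort (evalsP ρ)) ⟨3, by norm_num⟩ := rfl
    rw [h1, h2]
    exact Tuple.monotone_sort (evalsP ρ) (Fin.le_last _)
  have hmin : ∀ q : Fin (2*2), sortDesc (evalsP ρ) ⟨3, by norm_num⟩ ≤ evalsP ρ q := by
    intro q
    have h1 : evalsP ρ q
        = (evalsP ρ ∘ Tuple.sort (evalsP ρ)) ((Tuple.sort (evalsP ρ)).symm q) := by simp
    have h2 : sortDesc (evalsP ρ) ⟨3, by norm_num⟩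
        = (evalsP ρ ∘ Tuple.sort (evalsP ρ)) ⟨0, by norm_num⟩ := rfl
    rw [h1, h2]
    exact Tuple.monotone_sort (evalsP ρ) (Fin.zero_le _)
  have heH : ∀ p, evals ρ p = hH.eigenvalues p := by
    intro p; rw [evals, dif_pos hH]
  have heP : ∀ p : Fin 2 × Fin 2, evalsP ρ (finProdFinEquiv p) = hH.eigenvalues p := by
    intro p
    rw [evalsP, Function.comp_apply, Equiv.symm_apply_apply, heH]
  have hlo : ∀ p : Fin 2 × Fin 2,
      sortDesc (evalsP ρ) ⟨3, by norm_num⟩ ≤ hH.eigenvalues p := by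
    intro p; rw [← heP p]; exact hmin _
  have hhi : ∀ p : Fin 2 × Fin 2,
      hH.eigenvalues p ≤ sortDesc (evalsP ρ) ⟨0, by norm_num⟩ := by
    intro p; rw [← heP p]; exact hmax _
  have hsum : ∑ p, hH.eigenvalues p = 1 := by
    have := congrArg Complex.re (((trace_eq_sum_evals hH).symm).trans hρ1)
    simpa [Complex.re_sum] using this
  have hsum4 : sortDesc (evalsP ρ) ⟨0, by norm_num⟩ + sortDesc (evalsP ρ) ⟨1, by norm_num⟩
      + sortDesc (evalsP ρ) ⟨2, by norm_num⟩ + sortDesc (evalsP ρ) ⟨3, by norm_num⟩ = 1 := by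
    have hb : Function.Bijective
        (fun i : Fin (2*2) => Tuple.sort (evalsP ρ) (Fin.rev i)) :=
      (Tuple.sort (evalsP ρ)).bijective.comp Fin.rev_involutive.bijective
    have h1 : ∑ i : Fin (2*2), sortDesc (evalsP ρ) i = ∑ i : Fin (2*2), evalsP ρ i :=
      Function.Bijective.sum_comp hb (evalsP ρ)
    have h2 : ∑ i : Fin (2*2), evalsP ρ i = ∑ p : Fin 2 × Fin 2, evals ρ p :=
      Equiv.sum_comp finProdFinEquiv.symm (evals ρ)
    have h3 : ∑ p : Fin 2 × Fin 2, evals ρ p = 1 := by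
      rw [← hsum]; exact Finset.sum_congr rfl fun p _ => heH p
    have expand := Fin.sum_univ_four (sortDesc (evalsP ρ))
    calc sortDesc (evalsP ρ) ⟨0, by norm_num⟩ + sortDesc (evalsP ρ) ⟨1, by norm_num⟩
          + sortDesc (evalsP ρ) ⟨2, by norm_num⟩ + sortDesc (evalsP ρ) ⟨3, by norm_num⟩
        = ∑ i : Fin (2*2), sortDesc (evalsP ρ) i := expand.symm
      _ = 1 := by rw [h1, h2, h3]
  -- unitaries
  have hdiagA : star (hA.eigenvectorUnitary : Matrix (Fin 2) (Fin 2) ℂ) * ptraceB ρ *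
      (hA.eigenvectorUnitary : Matrix (Fin 2) (Fin 2) ℂ)
      = diagonal (RCLike.ofReal ∘ hA.eigenvalues) := by
    have h := hA.conjStarAlgAut_star_eigenvectorUnitary
    rw [Unitary.conjStarAlgAut_apply, Unitary.coe_star, star_star] at h
    exact h
  have hdiagB : star (hB.eigenvectorUnitary : Matrix (Fin 2) (Fin 2) ℂ) * ptraceA ρ *
      (hB.eigenvectorUnitary : Matrix (Fin 2) (Fin 2) ℂ)
      = diagonal (RCLike.ofReal ∘ hB.eigenvalues) := by
    have h := hB.conjStarAlgAut_star_eigenvectorUnitary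
    rw [Unitary.conjStarAlgAut_apply, Unitary.coe_star, star_star] at h
    exact h
  obtain ⟨hU1, hU2⟩ := Unitary.mem_iff.mp hA.eigenvectorUnitary.2
  obtain ⟨hW1, hW2⟩ := Unitary.mem_iff.mp hB.eigenvectorUnitary.2
  set U : Matrix (Fin 2) (Fin 2) ℂ := (hA.eigenvectorUnitary : Matrix (Fin 2) (Fin 2) ℂ)
    with hUdef
  set W : Matrix (Fin 2) (Fin 2) ℂ := (hB.eigenvectorUnitary : Matrix (Fin 2) (Fin 2) ℂ)
    with hWdef
  have hUc : ∀ k l, U k 0 * star (U l 0) + U k 1 * star (U l 1)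
      = if k = l then (1:ℂ) else 0 := by
    intro k l
    have := Matrix.ext_iff.mpr hU2 k l
    simpa [Matrix.mul_apply, Fin.sum_univ_two, Matrix.star_apply, Matrix.one_apply] using this
  have hWc : ∀ k l, W k 0 * star (W l 0) + W k 1 * star (W l 1)
      = if k = l then (1:ℂ) else 0 := by
    intro k l
    have := Matrix.ext_iff.mpr hW2 k l
    simpa [Matrix.mul_apply, Fin.sum_univ_two, Matrix.star_apply, Matrix.one_apply] using this
  have hUn : ∀ m, star (U 0 m) * U 0 m + star (U 1 m) * U 1 m = 1 := by
    intro m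
    have := Matrix.ext_iff.mpr hU1 m m
    simpa [Matrix.mul_apply, Fin.sum_univ_two, Matrix.star_apply, Matrix.one_apply] using this
  have hWn : ∀ n, star (W 0 n) * W 0 n + star (W 1 n) * W 1 n = 1 := by
    intro n
    have := Matrix.ext_iff.mpr hW1 n n
    simpa [Matrix.mul_apply, Fin.sum_univ_two, Matrix.star_apply, Matrix.one_apply] using this
  -- the four diagonal quantities
  have EA : ∀ m : Fin 2,
      (star (fun p : Fin 2 × Fin 2 => U p.1 m * W p.2 0) ⬝ᵥ
          ρ *ᵥ (fun p : Fin 2 × Fin 2 => U p.1 m * W p.2 0)).re +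
        (star (fun p : Fin 2 × Fin 2 => U p.1 m * W p.2 1) ⬝ᵥ
          ρ *ᵥ (fun p : Fin 2 × Fin 2 => U p.1 m * W p.2 1)).re
      = hA.eigenvalues m := by
    intro m
    have h := keyA ρ (fun i => U i m) (fun k => W k 0) (fun k => W k 1)
      (by simpa using hWc 0 0) (by simpa using hWc 0 1)
      (by simpa using hWc 1 0) (by simpa using hWc 1 1)
    rw [entry_eq, hdiagA] at h
    have h2 := congrArg Complex.re h
    simpa [Matrix.diagonal_apply_eq] using h2
  have EB : ∀ n : Fin 2,
      (star (fun p : Fin 2 × Fin 2 => U p.1 0 * W p.2 n) ⬝ᵥ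
          ρ *ᵥ (fun p : Fin 2 × Fin 2 => U p.1 0 * W p.2 n)).re +
        (star (fun p : Fin 2 × Fin 2 => U p.1 1 * W p.2 n) ⬝ᵥ
          ρ *ᵥ (fun p : Fin 2 × Fin 2 => U p.1 1 * W p.2 n)).re
      = hB.eigenvalues n := by
    intro n
    have h := keyB ρ (fun k => W k n) (fun i => U i 0) (fun i => U i 1)
      (by simpa using hUc 0 0) (by simpa using hUc 0 1)
      (by simpa using hUc 1 0) (by simpa using hUc 1 1)
    rw [entry_eq, hdiagB] at h
    have h2 := congrArg Complex.re h
    simpa [Matrix.diagonal_apply_eq] using h2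
  have bnd : ∀ m n : Fin 2,
      sortDesc (evalsP ρ) ⟨3, by norm_num⟩ ≤
        (star (fun p : Fin 2 × Fin 2 => U p.1 m * W p.2 n) ⬝ᵥ
          ρ *ᵥ (fun p : Fin 2 × Fin 2 => U p.1 m * W p.2 n)).re ∧
      (star (fun p : Fin 2 × Fin 2 => U p.1 m * W p.2 n) ⬝ᵥ
          ρ *ᵥ (fun p : Fin 2 × Fin 2 => U p.1 m * W p.2 n)).re ≤
        sortDesc (evalsP ρ) ⟨0, by norm_num⟩ := by
    intro m n
    exact quadForm_bounds hH _
      (unit_tensor (fun i => U i m) (fun k => W k n) (hUn m) (hWn n)) hlo hhi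
  -- eigenvalue sums of the reduced matrices
  have htrA : (ptraceB ρ).trace = ρ.trace := by
    simp [Matrix.trace, Matrix.diag, ptraceB, Fintype.sum_prod_type]
  have htrB : (ptraceA ρ).trace = ρ.trace := by
    rw [Matrix.trace, Matrix.trace]
    rw [show ∑ p : Fin 2 × Fin 2, ρ.diag p = ∑ k, ∑ i, ρ (i,k) (i,k) from ?_]
    · simp [Matrix.diag, ptraceA]
    · rw [Finset.sum_comm]
      simp [Matrix.diag, Fintype.sum_prod_type]
  have hsA : hA.eigenvalues 0 + hA.eigenvalues 1 = 1 := by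
    have := congrArg Complex.re
      ((trace_eq_sum_evals hA).symm.trans (htrA.trans hρ1))
    simpa [Fin.sum_univ_two, Complex.add_re] using this
  have hsB : hB.eigenvalues 0 + hB.eigenvalues 1 = 1 := by
    have := congrArg Complex.re
      ((trace_eq_sum_evals hB).symm.trans (htrB.trans hρ1))
    simpa [Fin.sum_univ_two, Complex.add_re] using this
  -- rewrite the goal
  have gA : evals (ptraceB ρ) = hA.eigenvalues := by rw [evals, dif_pos hA]
  have gB : evals (ptraceA ρ) = hB.eigenvalues := by rw [evals, dif_pos hB]
  rw [gA, gB]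
  have e00 := EA 0
  have e10 := EA 1
  have f00 := EB 0
  have f10 := EB 1
  have b00 := bnd 0 0
  have b01 := bnd 0 1
  have b10 := bnd 1 0
  have b11 := bnd 1 1
  rcases le_total (hA.eigenvalues 0) (hA.eigenvalues 1) with ha | ha <;>
    rcases le_total (hB.eigenvalues 0) (hB.eigenvalues 1) with hb | hb
  · rw [min_eq_left ha, min_eq_left hb]
    linarith [b00.1, b00.2, b01.1, b01.2, b10.1, b10.2, b11.1, b11.2]
  · rw [min_eq_left ha, min_eq_right hb]
    linarith [b00.1, b00.2, b01.1, b01.2, b10.1, b10.2, b11.1, b11.2]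
  · rw [min_eq_right ha, min_eq_left hb]
    linarith [b00.1, b00.2, b01.1, b01.2, b10.1, b10.2, b11.1, b11.2]
  · rw [min_eq_right ha, min_eq_right hb]
    linarith [b00.1, b00.2, b01.1, b01.2, b10.1, b10.2, b11.1, b11.2]
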